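/- Let s ≤ t be real numbers, let b₁, b₂ : ℝ → ℝ be continuous on [s, t], set a := b₁ + b₂, and let q ∈ ℝ. Define F(s) := q·exp(−∫_s^t a(u) du) + ∫_s^t b₁(u)·exp(−∫_s^u a(v) dv) du. Then 1 − F(s) = (1 − q)·exp(−∫_s^t a(u) du) + ∫_s^t b₂(u)·exp(−∫_s^u a(v) dv) du. -/

import Mathlib

open intervalIntegral Real

lemma smoothed_key (s t : ℝ) (c : ℝ → ℝ) (hc : Continuous c) :
    ∫ u in s..t, c u * Real.exp (-∫ v in s..u, c v)
      = 1 - Real.exp (-∫ u in s..t, c u) := by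
  have hprim : Continuous fun u => ∫ v in s..u, c v :=
    intervalIntegral.continuous_primitive (fun a b => hc.intervalIntegrable a b) s
  have hderiv : ∀ u ∈ Set.uIcc s t,
      HasDerivAt (fun u => -Real.exp (-∫ v in s..u, c v))
        (c u * Real.exp (-∫ v in s..u, c v)) u := by
    intro u _
    have h1 : HasDerivAt (fun u => ∫ v in s..u, c v) (c u) u :=
      intervalIntegral.integral_hasDerivAt_right (hc.intervalIntegrable _ _)
        (hc.stronglyMeasurable.stronglyMeasurableAtFilter) hc.continuousAt
    have h2 : HasDerivAt (fun u => -Real.exp (-∫ v in s..u, c v))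
        (-(Real.exp (-∫ v in s..u, c v) * -c u)) u := (h1.neg.exp).neg
    convert h2 using 1
    ring
  have hint : IntervalIntegrable (fun u => c u * Real.exp (-∫ v in s..u, c v))
      MeasureTheory.volume s t :=
    (hc.mul (hprim.neg.rexp)).intervalIntegrable s t
  have := intervalIntegral.integral_eq_sub_of_hasDerivAt hderiv hint
  rw [this]
  simp [intervalIntegral.integral_same]
  ring

/-- Dual expression for the smoothed filter. -/
theorem smoothed_filter_dual_expression
    (s t : ℝ) (hst : s ≤ t) (b₁ b₂ : ℝ → ℝ)
    (hb₁ : ContinuousOn b₁ (Set.Icc s t))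
    (hb₂ : ContinuousOn b₂ (Set.Icc s t))
    (a : ℝ → ℝ) (ha : a = fun u => b₁ u + b₂ u)
    (q F : ℝ)
    (hF : F = q * Real.exp (-∫ u in s..t, a u)
            + ∫ u in s..t, b₁ u * Real.exp (-∫ v in s..u, a v)) :
    1 - F = (1 - q) * Real.exp (-∫ u in s..t, a u)
          + ∫ u in s..t, b₂ u * Real.exp (-∫ v in s..u, a v) := by
  have haC : ContinuousOn a (Set.Icc s t) := ha ▸ hb₁.add hb₂
  set c : ℝ → ℝ := Set.IccExtend hst (fun x : Set.Icc s t => a x) with hc_def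
  have hc : Continuous c :=
    Continuous.Icc_extend' (continuousOn_iff_continuous_restrict.mp haC)
  have hagree : ∀ u ∈ Set.Icc s t, c u = a u := fun u hu =>
    Set.IccExtend_of_mem hst _ hu
  have huIcc : Set.uIcc s t = Set.Icc s t := Set.uIcc_of_le hst
  have hinner : ∀ u ∈ Set.Icc s t, (∫ v in s..u, a v) = ∫ v in s..u, c v := by
    intro u hu
    apply intervalIntegral.integral_congr
    intro v hv
    have : v ∈ Set.Icc s t := by
      rcases hv with ⟨h1, h2⟩
      constructor
      · exact le_trans (le_min le_rfl hu.1) h1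
      · exact le_trans h2 (max_le hst hu.2)
    exact (hagree v this).symm
  have hEcont : ContinuousOn (fun u => Real.exp (-∫ v in s..u, a v)) (Set.Icc s t) := by
    have : Continuous fun u => Real.exp (-∫ v in s..u, c v) :=
      ((intervalIntegral.continuous_primitive (fun a b => hc.intervalIntegrable a b) s).neg).rexp
    apply this.continuousOn.congr
    intro u hu
    simp [hinner u hu]
  have hst' : s ∈ Set.Icc s t := ⟨le_rfl, hst⟩
  have htt : t ∈ Set.Icc s t := ⟨hst, le_rfl⟩
  have hi1 : IntervalIntegrable (fun u => b₁ u * Real.exp (-∫ v in s..u, a v))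
      MeasureTheory.volume s t :=
    ((hb₁.mul hEcont).mono huIcc.subset).intervalIntegrable
  have hi2 : IntervalIntegrable (fun u => b₂ u * Real.exp (-∫ v in s..u, a v))
      MeasureTheory.volume s t :=
    ((hb₂.mul hEcont).mono huIcc.subset).intervalIntegrable
  have hsum : (∫ u in s..t, b₁ u * Real.exp (-∫ v in s..u, a v))
      + (∫ u in s..t, b₂ u * Real.exp (-∫ v in s..u, a v))
      = ∫ u in s..t, c u * Real.exp (-∫ v in s..u, c v) := by
    rw [← intervalIntegral.integral_add hi1 hi2]
    apply intervalIntegral.integral_congr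
    intro u hu
    have hu' : u ∈ Set.Icc s t := huIcc ▸ hu
    have h1 := hagree u hu'
    have h2 := hinner u hu'
    simp only [← h2, h1, ha]
    ring
  have houter : (∫ u in s..t, a u) = ∫ u in s..t, c u := by
    apply intervalIntegral.integral_congr
    intro u hu
    exact (hagree u (huIcc ▸ hu)).symm
  have hkey := smoothed_key s t c hc
  rw [← hsum, ← houter] at hkey
  subst hF
  linarith [hkey]
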